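/- arXiv:2206.07766 — 5 statements merged into one kernel-verified Lean document; each statement's English description precedes it below -/
import Mathlib

section
/- Under square loss, if a predictor f = w∘φ is simultaneously optimal across all environments in ℰ (i.e., for all e₁, e₂ ∈ ℰ and all z in the common support, E_{e₁}[Y | φ(X)=z] = E_{e₂}[Y | φ(X)=z]), and additionally E_{e}[Y²] is identical across environments and the distribution of φ(X) is identical across environments, then the population square losses L_{e₁}(f) and L_{e₂}(f) are equal for all e₁, e₂ ∈ ℰ. -/
open MeasureTheory

/-- Lemma A.1, part (i): under square loss, if `f = w ∘ φ` where `w (φ ·)` is (a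
version of) the conditional mean `E_e[Y | φ(X)]` in every environment `e`
(so `f` is simultaneously optimal across environments), and additionally
`E_e[Y²]` is identical across environments and the distribution of `φ(X)` is
identical across environments, then the population square losses
`L_e(f) = E_e[(1/2)(f(X) − Y)²]` agree for all pairs of environments. -/
theorem sq_loss_invariant_of_simultaneously_optimal
    {X Z E : Type*} [MeasurableSpace X] [MeasurableSpace Z]
    (μ : E → Measure (X × ℝ)) [∀ e, IsProbabilityMeasure (μ e)]
    (φ : X → Z) (w : Z → ℝ) (hφ : Measurable φ) (hw : Measurable w)
    (hY2int : ∀ e, Integrable (fun p : X × ℝ => p.2 ^ 2) (μ e))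
    (hlossint : ∀ e, Integrable (fun p : X × ℝ => (w (φ p.1) - p.2) ^ 2) (μ e))
    (hopt : ∀ e,
      (μ e)[(fun p : X × ℝ => p.2) |
        MeasurableSpace.comap (fun p : X × ℝ => φ p.1) inferInstance]
        =ᵐ[μ e] fun p => w (φ p.1))
    (hY2 : ∀ e₁ e₂, ∫ p, p.2 ^ 2 ∂(μ e₁) = ∫ p, p.2 ^ 2 ∂(μ e₂))
    (hφdist : ∀ e₁ e₂,
      Measure.map (fun p : X × ℝ => φ p.1) (μ e₁)
        = Measure.map (fun p : X × ℝ => φ p.1) (μ e₂)) :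
    ∀ e₁ e₂,
      ∫ p, (1/2 : ℝ) * (w (φ p.1) - p.2) ^ 2 ∂(μ e₁)
        = ∫ p, (1/2 : ℝ) * (w (φ p.1) - p.2) ^ 2 ∂(μ e₂) := by
  -- notation
  set g : X × ℝ → Z := fun p => φ p.1 with hg_def
  have hg : Measurable g := hφ.comp measurable_fst
  have hwg : Measurable (fun p : X × ℝ => w (φ p.1)) := hw.comp hg
  -- integrability of w(φ x)^2
  have hw2int : ∀ e, Integrable (fun p : X × ℝ => (w (φ p.1)) ^ 2) (μ e) := by
    intro e
    refine Integrable.mono' (((hlossint e).const_mul 2).add ((hY2int e).const_mul 2))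
      (hwg.pow_const 2).aestronglyMeasurable (Filter.Eventually.of_forall fun p => ?_)
    simp only [Real.norm_eq_abs, abs_of_nonneg (sq_nonneg (w (φ p.1))), Pi.add_apply]
    nlinarith [sq_nonneg (w (φ p.1) - 2 * p.2)]
  -- integrability of products
  have hwyint : ∀ e, Integrable (fun p : X × ℝ => w (φ p.1) * p.2) (μ e) := by
    intro e
    refine Integrable.mono' (((hw2int e).const_mul (1/2)).add ((hY2int e).const_mul (1/2)))
      (hwg.mul measurable_snd).aestronglyMeasurable (Filter.Eventually.of_forall fun p => ?_)
    simp only [Real.norm_eq_abs, Pi.add_apply, abs_mul]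
    nlinarith [sq_nonneg (|w (φ p.1)| - |p.2|), sq_abs (w (φ p.1)), sq_abs p.2,
      abs_nonneg (w (φ p.1)), abs_nonneg p.2]
  have hYint : ∀ e, Integrable (fun p : X × ℝ => p.2) (μ e) := by
    intro e
    refine Integrable.mono' ((hY2int e).add (integrable_const 1))
      measurable_snd.aestronglyMeasurable (Filter.Eventually.of_forall fun p => ?_)
    simp only [Real.norm_eq_abs, Pi.add_apply]
    nlinarith [sq_nonneg (|p.2| - 1), sq_abs p.2]
  -- key: ∫ w(φx) y = ∫ w(φx)^2
  have hkey : ∀ e, ∫ p, w (φ p.1) * p.2 ∂(μ e) = ∫ p, (w (φ p.1)) ^ 2 ∂(μ e) := by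
    intro e
    set m : MeasurableSpace (X × ℝ) :=
      MeasurableSpace.comap (fun p : X × ℝ => φ p.1) inferInstance with hm_def
    have hm : m ≤ Prod.instMeasurableSpace := hg.comap_le
    haveI : SigmaFinite ((μ e).trim hm) := inferInstance
    have hfm : StronglyMeasurable[m] (fun p : X × ℝ => w (φ p.1)) := by
      refine (hw.comp ?_).stronglyMeasurable
      exact Measurable.of_comap_le le_rfl
    have hInt : Integrable ((fun p : X × ℝ => w (φ p.1)) * fun p : X × ℝ => p.2) (μ e) :=
      hwyint e
    have hpull := condExp_mul_of_stronglyMeasurable_left (m := m) (μ := μ e) hfm hInt (hYint e)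
    calc ∫ p, w (φ p.1) * p.2 ∂(μ e)
        = ∫ p, ((fun p : X × ℝ => w (φ p.1)) * fun p : X × ℝ => p.2) p ∂(μ e) := rfl
      _ = ∫ p, ((μ e)[((fun p : X × ℝ => w (φ p.1)) * fun p : X × ℝ => p.2) | m]) p ∂(μ e) :=
          (integral_condExp hm).symm
      _ = ∫ p, (w (φ p.1)) ^ 2 ∂(μ e) := by
          refine integral_congr_ae ?_
          filter_upwards [hpull, hopt e] with p h1 h2
          simp only [Pi.mul_apply] at h1
          rw [h1, h2]; ring
  -- ∫ w² is env-invariant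
  have hw2eq : ∀ e₁ e₂, ∫ p, (w (φ p.1)) ^ 2 ∂(μ e₁) = ∫ p, (w (φ p.1)) ^ 2 ∂(μ e₂) := by
    intro e₁ e₂
    have h1 : ∫ p, (w (φ p.1)) ^ 2 ∂(μ e₁) = ∫ z, (w z) ^ 2 ∂(Measure.map g (μ e₁)) :=
      (integral_map hg.aemeasurable ((hw.pow_const 2).aestronglyMeasurable)).symm
    have h2 : ∫ p, (w (φ p.1)) ^ 2 ∂(μ e₂) = ∫ z, (w z) ^ 2 ∂(Measure.map g (μ e₂)) :=
      (integral_map hg.aemeasurable ((hw.pow_const 2).aestronglyMeasurable)).symm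
    rw [h1, h2, hφdist e₁ e₂]
  -- expansion of the loss
  have hexp : ∀ e, ∫ p, (1/2 : ℝ) * (w (φ p.1) - p.2) ^ 2 ∂(μ e)
      = (1/2) * (∫ p, p.2 ^ 2 ∂(μ e) - ∫ p, (w (φ p.1)) ^ 2 ∂(μ e)) := by
    intro e
    rw [integral_const_mul]
    congr 1
    have : ∫ p, (w (φ p.1) - p.2) ^ 2 ∂(μ e)
        = ∫ p, ((w (φ p.1))^2 - 2 * (w (φ p.1) * p.2) + p.2^2) ∂(μ e) := by
      refine integral_congr_ae (Filter.Eventually.of_forall fun p => ?_); ring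
    have hB : Integrable (fun p : X × ℝ => 2 * (w (φ p.1) * p.2)) (μ e) :=
      (hwyint e).const_mul 2
    have hA : Integrable (fun p : X × ℝ => (w (φ p.1)) ^ 2 - 2 * (w (φ p.1) * p.2)) (μ e) :=
      (hw2int e).sub hB
    rw [this, integral_add hA (hY2int e), integral_sub (hw2int e) hB, integral_const_mul, hkey e]
    ring
  intro e₁ e₂
  rw [hexp e₁, hexp e₂, hY2 e₁ e₂, hw2eq e₁ e₂]
end

section
/- In the two-bit environment under square loss, for a fixed α ∈ (0,1), an odd predictor f with a = f(1,1), b = f(1,−1) satisfies: (i) E_e[f(X)²] and E_e[f(X)Y] identical across all environments e = (α, β_e) with β_e ∈ (0,1), and (ii) E_e[f(X)²] = E_e[f(X)Y] for all e, if and only if either a=b=0 (the zero predictor) or a = b = 1−2α (the IRM-invariant predictor f(x₁,x₂) = (1−2α)·x₁). -/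
/-- The probability mass function of `Rad(σ)`: a random variable on `{-1, 1}`
taking the value `-1` with probability `σ` and `+1` with probability `1 - σ`. -/
noncomputable def rad (σ s : ℝ) : ℝ := if s = -1 then σ else 1 - σ

/-- Expectation of `g Y X₁ X₂` in the two-bit environment `(α, β)`:
`Y = Rad(0.5)`, `X₁ = Y · Rad(α)`, `X₂ = Y · Rad(β)`, all independent. -/
noncomputable def twoBitExp (α β : ℝ) (g : ℝ → ℝ → ℝ → ℝ) : ℝ :=
  ∑ y ∈ ({-1, 1} : Finset ℝ), ∑ n₁ ∈ ({-1, 1} : Finset ℝ), ∑ n₂ ∈ ({-1, 1} : Finset ℝ),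
    rad (1/2) y * rad α n₁ * rad β n₂ * g y (y * n₁) (y * n₂)

/-- The odd predictor on `{-1,1}²` determined by `a = f(1,1) = −f(−1,−1)` and
`b = f(1,−1) = −f(−1,1)`. -/
noncomputable def oddPred (a b x₁ x₂ : ℝ) : ℝ :=
  if x₁ = 1 then (if x₂ = 1 then a else b) else (if x₂ = 1 then -b else -a)

/-- Population square loss `L_e(f) = (1/2)·E^e[(f(X) − Y)²]` of the odd predictor
determined by `a, b` in the two-bit environment `e = (α, β)`. -/
noncomputable def sqLoss (α β a b : ℝ) : ℝ :=
  twoBitExp α β (fun y x₁ x₂ => (1/2) * (oddPred a b x₁ x₂ - y) ^ 2)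

lemma sq_eval (α β a b : ℝ) :
    twoBitExp α β (fun _ x₁ x₂ => (oddPred a b x₁ x₂) ^ 2)
      = a^2*(1-α-β+2*α*β)+b^2*(α+β-2*α*β) := by
  simp only [twoBitExp, rad, oddPred, Finset.sum_insert, Finset.mem_singleton,
    Finset.sum_singleton]
  norm_num; ring

lemma lin_eval (α β a b : ℝ) :
    twoBitExp α β (fun y x₁ x₂ => oddPred a b x₁ x₂ * y)
      = a*(1-α-β)+b*(β-α) := by
  simp only [twoBitExp, rad, oddPred, Finset.sum_insert, Finset.mem_singleton,
    Finset.sum_singleton]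
  norm_num; ring

/-- Two-bit environment, square loss, fixed `α ∈ (0,1)`: an odd predictor with
`a = f(1,1)`, `b = f(1,−1)` satisfies (i) `E_e[f(X)²]` and `E_e[f(X)Y]` are
identical across all environments `(α, β_e)` with `β_e ∈ (0,1)`, and
(ii) `E_e[f(X)²] = E_e[f(X)Y]` for all such environments, if and only if
either `a = b = 0` (the zero predictor) or `a = b = 1 − 2α` (the IRM-invariant
predictor `f(x₁,x₂) = (1−2α)·x₁`). -/
theorem twoBit_sq_vrex_irms_characterization (α a b : ℝ) (hα : α ∈ Set.Ioo (0 : ℝ) 1) :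
    ((∀ β₁ ∈ Set.Ioo (0 : ℝ) 1, ∀ β₂ ∈ Set.Ioo (0 : ℝ) 1,
        twoBitExp α β₁ (fun _ x₁ x₂ => (oddPred a b x₁ x₂) ^ 2)
          = twoBitExp α β₂ (fun _ x₁ x₂ => (oddPred a b x₁ x₂) ^ 2) ∧
        twoBitExp α β₁ (fun y x₁ x₂ => oddPred a b x₁ x₂ * y)
          = twoBitExp α β₂ (fun y x₁ x₂ => oddPred a b x₁ x₂ * y)) ∧
      (∀ β ∈ Set.Ioo (0 : ℝ) 1,
        twoBitExp α β (fun _ x₁ x₂ => (oddPred a b x₁ x₂) ^ 2)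
          = twoBitExp α β (fun y x₁ x₂ => oddPred a b x₁ x₂ * y)))
    ↔ ((a = 0 ∧ b = 0) ∨ (a = 1 - 2 * α ∧ b = 1 - 2 * α)) := by
  simp only [sq_eval, lin_eval]
  constructor
  · rintro ⟨h1, h2⟩
    have e1 := (h1 (1/4) (by norm_num) (3/4) (by norm_num)).2
    have hab : a = b := by linarith
    have e2 := h2 (1/2) (by norm_num)
    subst hab
    have : a * (a - (1 - 2*α)) = 0 := by nlinarith
    rcases mul_eq_zero.1 this with h | h
    · exact Or.inl ⟨h, h⟩
    · exact Or.inr ⟨by linarith, by linarith⟩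
  · rintro (⟨ha, hb⟩ | ⟨ha, hb⟩) <;> subst ha <;> subst hb <;>
      exact ⟨fun β₁ _ β₂ _ => ⟨by ring, by ring⟩, fun β _ => by ring⟩
end

section
/- In the two-bit environment under logistic loss with fixed α ∈ (0,1), the set of odd predictors lying in both the V-REx constraint set (equal losses across all environments (α, β_e), β_e ∈ (0,1)) and the IRM-S constraint set (∇_{w|w=1} L_e(w·f) = 0 for all environments) consists of exactly two predictors: the zero predictor f ≡ 0 and f(x₁, x₂) = log((1−α)/α)·x₁. -/
/-- Population logistic loss `L_e(f) = E^e[log(1 + exp(−f(X)·Y))]` of the odd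
predictor determined by `a, b` in the two-bit environment `(α, β)`. -/
noncomputable def logLoss (α β a b : ℝ) : ℝ :=
  twoBitExp α β (fun y x₁ x₂ => Real.log (1 + Real.exp (-(oddPred a b x₁ x₂ * y))))

/-- The IRM-S stationarity quantity `∇_{w|w=1} L_e(w·f)` under logistic loss:
`E^e[−f(X)·Y / (1 + exp(f(X)·Y))]`. -/
noncomputable def logGrad (α β a b : ℝ) : ℝ :=
  twoBitExp α β (fun y x₁ x₂ =>
    -(oddPred a b x₁ x₂ * y) / (1 + Real.exp (oddPred a b x₁ x₂ * y)))

/-- Auxiliary: the pointwise logistic loss `log(1 + e^{-t})`. -/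
noncomputable def tbL (t : ℝ) : ℝ := Real.log (1 + Real.exp (-t))

/-- Auxiliary: the pointwise logistic gradient `-t/(1 + e^t)`. -/
noncomputable def tbG (t : ℝ) : ℝ := -t / (1 + Real.exp t)

lemma tbL_neg (t : ℝ) : tbL (-t) = tbL t + t := by
  unfold tbL
  rw [neg_neg]
  have h : (1:ℝ) + Real.exp t = Real.exp t * (1 + Real.exp (-t)) := by
    rw [mul_add, mul_one, ← Real.exp_add]
    simp [add_comm]
  rw [h, Real.log_mul (Real.exp_ne_zero t) (by positivity), Real.log_exp]
  ring

lemma tbL_anti {s t : ℝ} (h : s < t) : tbL t < tbL s := by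
  unfold tbL
  apply Real.log_lt_log (by positivity)
  have := Real.exp_lt_exp.mpr (neg_lt_neg h)
  linarith

lemma logLoss_eq (α β a b : ℝ) : logLoss α β a b =
    (1-α)*(1-β)*tbL a + (1-α)*β*tbL b + α*(1-β)*tbL (-b) + α*β*tbL (-a) := by
  simp only [logLoss, twoBitExp, oddPred, rad, tbL, Finset.sum_insert, Finset.sum_singleton,
    Finset.mem_singleton]
  norm_num
  ring

lemma logGrad_eq (α β a b : ℝ) : logGrad α β a b =
    (1-α)*(1-β)*tbG a + (1-α)*β*tbG b + α*(1-β)*tbG (-b) + α*β*tbG (-a) := by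
  simp only [logGrad, twoBitExp, oddPred, rad, tbG, Finset.sum_insert, Finset.sum_singleton,
    Finset.mem_singleton]
  norm_num
  ring

/-- From the V-REx equality of environment losses, the predictor must be symmetric. -/
lemma tb_ab_eq (α a b : ℝ) (hα0 : 0 < α) (hα1' : 0 < 1 - α)
    (hV : (1-α)*tbL a + α*tbL (-b) = (1-α)*tbL b + α*tbL (-a)) : a = b := by
  have hna := tbL_neg a
  have hnb := tbL_neg b
  rcases lt_trichotomy a b with h | h | h
  · exfalso
    rcases le_or_gt α (1/2) with hhalf | hhalf
    · have hV' : (1-2*α)*(tbL a - tbL b) = α*(a-b) := by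
        linear_combination hV + α * hna - α * hnb
      have h1 := tbL_anti h
      have h2 : 0 ≤ (1-2*α)*(tbL a - tbL b) :=
        mul_nonneg (by linarith) (by linarith)
      have h3 : 0 < α*(b-a) := mul_pos hα0 (by linarith)
      nlinarith
    · have hV'' : (1-2*α)*(tbL (-b) - tbL (-a)) = (1-α)*(b-a) := by
        linear_combination -hV - (1-α) * hna + (1-α) * hnb
      have h1 := tbL_anti (neg_lt_neg h)
      have h2 : (1-2*α)*(tbL (-b) - tbL (-a)) < 0 :=
        mul_neg_of_neg_of_pos (by linarith) (by linarith)
      have h3 : 0 < (1-α)*(b-a) := mul_pos hα1' (by linarith)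
      linarith
  · exact h
  · exfalso
    rcases le_or_gt α (1/2) with hhalf | hhalf
    · have hV' : (1-2*α)*(tbL b - tbL a) = α*(b-a) := by
        linear_combination -hV - α * hna + α * hnb
      have h1 := tbL_anti h
      have h2 : 0 ≤ (1-2*α)*(tbL b - tbL a) :=
        mul_nonneg (by linarith) (by linarith)
      have h3 : 0 < α*(a-b) := mul_pos hα0 (by linarith)
      nlinarith
    · have hV'' : (1-2*α)*(tbL (-a) - tbL (-b)) = (1-α)*(a-b) := by
        linear_combination hV + (1-α) * hna - (1-α) * hnb
      have h1 := tbL_anti (neg_lt_neg h)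
      have h2 : (1-2*α)*(tbL (-a) - tbL (-b)) < 0 :=
        mul_neg_of_neg_of_pos (by linarith) (by linarith)
      have h3 : 0 < (1-α)*(a-b) := mul_pos hα1' (by linarith)
      linarith

/-- Clearing denominators in the IRM-S stationarity condition. -/
lemma tb_grad_clear (α s t : ℝ) (hC : (1-α)*tbG s + α*tbG (-t) = 0) :
    (1-α)*s*(1+Real.exp t) = α*t*Real.exp t*(1+Real.exp s) := by
  simp only [tbG, Real.exp_neg, neg_neg] at hC
  have hA : (0:ℝ) < 1 + Real.exp s := by positivity
  have hB1 : Real.exp t ≠ 0 := (Real.exp_pos t).ne'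
  have hB' : (0:ℝ) < 1 + (Real.exp t)⁻¹ := by positivity
  field_simp at hC
  linarith

/-- From the two stationarity equations with `a b ≠ 0`, the sum `a + b` is pinned down. -/
lemma tb_sum_eq (α a b : ℝ) (hα0 : 0 < α) (hα1' : 0 < 1 - α) (ha : a ≠ 0) (hb : b ≠ 0)
    (e1 : (1-α)*a*(1+Real.exp b) = α*b*Real.exp b*(1+Real.exp a))
    (e2 : (1-α)*b*(1+Real.exp a) = α*a*Real.exp a*(1+Real.exp b)) :
    a + b = 2 * Real.log ((1-α)/α) := by
  have hA : (0:ℝ) < 1 + Real.exp a := by positivity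
  have hB : (0:ℝ) < 1 + Real.exp b := by positivity
  have hm : ((1-α)^2 - α^2 * Real.exp a * Real.exp b) *
      (a * b * (1+Real.exp a) * (1+Real.exp b)) = 0 := by
    linear_combination ((1-α)*b*(1+Real.exp a)) * e1
      + (α*b*Real.exp b*(1+Real.exp a)) * e2
  have hne : a * b * (1+Real.exp a) * (1+Real.exp b) ≠ 0 :=
    mul_ne_zero (mul_ne_zero (mul_ne_zero ha hb) hA.ne') hB.ne'
  have key : (1-α)^2 = α^2 * Real.exp a * Real.exp b := by
    have := (mul_eq_zero.mp hm).resolve_right hne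
    linarith [sub_eq_zero.mp this]
  have hq : (0:ℝ) < (1 - α) / α := div_pos hα1' hα0
  have hEγ : Real.exp (Real.log ((1-α)/α)) = (1 - α) / α := Real.exp_log hq
  have hx : Real.exp (a + b) = Real.exp (2 * Real.log ((1-α)/α)) := by
    rw [Real.exp_add, show (2:ℝ) * Real.log ((1-α)/α) =
      Real.log ((1-α)/α) + Real.log ((1-α)/α) by ring, Real.exp_add, hEγ]
    have hα2 : α ≠ 0 := hα0.ne'
    field_simp
    linarith [key]
  exact Real.exp_eq_exp.mp hx

/-- The candidate invariant predictor is IRM-S stationary. -/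
lemma tb_gamma_grad (α : ℝ) (hα0 : 0 < α) (hα1' : 0 < 1 - α) :
    (1-α) * tbG (Real.log ((1-α)/α)) + α * tbG (-Real.log ((1-α)/α)) = 0 := by
  have hq : (0:ℝ) < (1 - α) / α := div_pos hα1' hα0
  have hEγ : Real.exp (Real.log ((1-α)/α)) = (1 - α) / α := Real.exp_log hq
  simp only [tbG, Real.exp_neg, hEγ, neg_neg]
  have h1 : (0:ℝ) < 1 + (1-α)/α := by positivity
  have h2 : (0:ℝ) < 1 + ((1-α)/α)⁻¹ := by positivity
  have hα2 : α ≠ 0 := hα0.ne'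
  have hα3 : (1:ℝ) - α ≠ 0 := hα1'.ne'
  field_simp
  ring

/-- Two-bit environment, logistic loss, fixed `α ∈ (0,1)`: an odd predictor (given
by `a = f(1,1)`, `b = f(1,−1)`) lies in both the V-REx constraint set (equal losses
across all environments `(α, β_e)`, `β_e ∈ (0,1)`) and the IRM-S constraint set
(`∇_{w|w=1} L_e(w·f) = 0` for all such environments) if and only if it is the zero
predictor or `f(x₁,x₂) = log((1−α)/α)·x₁`. -/
theorem twoBit_log_vrex_irms_characterization (α a b : ℝ) (hα : α ∈ Set.Ioo (0 : ℝ) 1) :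
    ((∀ β₁ ∈ Set.Ioo (0 : ℝ) 1, ∀ β₂ ∈ Set.Ioo (0 : ℝ) 1,
        logLoss α β₁ a b = logLoss α β₂ a b) ∧
      (∀ β ∈ Set.Ioo (0 : ℝ) 1, logGrad α β a b = 0))
    ↔ ((a = 0 ∧ b = 0) ∨
        (a = Real.log ((1 - α) / α) ∧ b = Real.log ((1 - α) / α))) := by
  obtain ⟨hα0, hα1⟩ := hα
  have hα1' : (0:ℝ) < 1 - α := by linarith
  have hmem14 : (1/4 : ℝ) ∈ Set.Ioo (0:ℝ) 1 := by norm_num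
  have hmem34 : (3/4 : ℝ) ∈ Set.Ioo (0:ℝ) 1 := by norm_num
  constructor
  · rintro ⟨hVrex, hIrm⟩
    have hVr := hVrex (1/4) hmem14 (3/4) hmem34
    rw [logLoss_eq, logLoss_eq] at hVr
    have hV : (1-α)*tbL a + α*tbL (-b) = (1-α)*tbL b + α*tbL (-a) := by
      linear_combination 2 * hVr
    have hg1 := hIrm (1/4) hmem14
    have hg2 := hIrm (3/4) hmem34
    rw [logGrad_eq] at hg1 hg2
    have hC : (1-α)*tbG a + α*tbG (-b) = 0 := by
      linear_combination (3/2) * hg1 - (1/2) * hg2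
    have hD : (1-α)*tbG b + α*tbG (-a) = 0 := by
      linear_combination (3/2) * hg2 - (1/2) * hg1
    have e1 := tb_grad_clear α a b hC
    have e2 := tb_grad_clear α b a hD
    by_cases ha : a = 0
    · left
      refine ⟨ha, ?_⟩
      rw [ha] at e2
      simp only [Real.exp_zero] at e2
      nlinarith [e2]
    · by_cases hb : b = 0
      · exfalso
        rw [hb] at e1
        simp only [Real.exp_zero] at e1
        exact ha (by nlinarith [e1])
      · have hsum := tb_sum_eq α a b hα0 hα1' ha hb e1 e2
        have hab := tb_ab_eq α a b hα0 hα1' hV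
        right
        constructor <;> linarith
  · rintro (⟨rfl, rfl⟩ | ⟨rfl, rfl⟩)
    · constructor
      · intro β₁ _ β₂ _
        rw [logLoss_eq, logLoss_eq]
        ring
      · intro β _
        rw [logGrad_eq]
        simp [tbG]
    · constructor
      · intro β₁ _ β₂ _
        rw [logLoss_eq, logLoss_eq]
        ring
      · intro β _
        rw [logGrad_eq]
        linear_combination tb_gamma_grad α hα0 hα1'
end

section
/- For the two-bit environment with fixed α ∈ (0,1), if the intersection of constraint sets I_X(ℰ_tr) ∩ I_S(ℰ_tr) is computed using only two training environments ℰ_tr = {(α, β₁), (α, β₂)} with distinct β₁, β₂ ∈ (0,1), then this intersection equals the intersection computed with all environments ℰ = {(α, β): β ∈ (0,1)}. -/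
/-- The IRM-S stationarity quantity `∇_{w|w=1} L_e(w·f)` under square loss:
`E^e[f(X)²] − E^e[f(X)·Y]`. -/
noncomputable def sqGrad (α β a b : ℝ) : ℝ :=
  twoBitExp α β (fun _ x₁ x₂ => (oddPred a b x₁ x₂) ^ 2)
    - twoBitExp α β (fun y x₁ x₂ => oddPred a b x₁ x₂ * y)

lemma affine_const {f : ℝ → ℝ} {β₁ β₂ : ℝ} (c d : ℝ)
    (h : ∀ β, f β = c + d * β) (hne : β₁ ≠ β₂) (heq : f β₁ = f β₂) :
    ∀ β β', f β = f β' := by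
  have hd : d = 0 := by
    rw [h, h] at heq
    have : d * (β₁ - β₂) = 0 := by linarith
    rcases mul_eq_zero.1 this with h' | h'
    · exact h'
    · exact absurd (by linarith : β₁ = β₂) hne
  intro β β'; rw [h, h, hd]; ring

lemma affine_zero {f : ℝ → ℝ} {β₁ β₂ : ℝ} (c d : ℝ)
    (h : ∀ β, f β = c + d * β) (hne : β₁ ≠ β₂) (h1 : f β₁ = 0) (h2 : f β₂ = 0) :
    ∀ β, f β = 0 := by
  have hd : d = 0 := by
    rw [h] at h1 h2
    have : d * (β₁ - β₂) = 0 := by linarith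
    rcases mul_eq_zero.1 this with h' | h'
    · exact h'
    · exact absurd (by linarith : β₁ = β₂) hne
  have hc : c = 0 := by rw [h, hd] at h1; linarith
  intro β; rw [h, hd, hc]; ring


/-- Corollary B.5: for fixed `α ∈ (0,1)` and any two distinct `β₁, β₂ ∈ (0,1)`,
an odd predictor satisfies the V-REx constraint (equal losses) and the IRM-S
constraint (zero stationarity gradient) on the two training environments
`{(α,β₁), (α,β₂)}` if and only if it satisfies them on all environments
`{(α,β) : β ∈ (0,1)}` — both under square loss and under logistic loss. -/
theorem twoEnv_constraints_eq_allEnv_constraints (α β₁ β₂ a b : ℝ)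
    (hα : α ∈ Set.Ioo (0 : ℝ) 1) (hβ₁ : β₁ ∈ Set.Ioo (0 : ℝ) 1)
    (hβ₂ : β₂ ∈ Set.Ioo (0 : ℝ) 1) (hne : β₁ ≠ β₂) :
    ((sqLoss α β₁ a b = sqLoss α β₂ a b ∧ sqGrad α β₁ a b = 0 ∧ sqGrad α β₂ a b = 0)
      ↔ ((∀ β ∈ Set.Ioo (0 : ℝ) 1, ∀ β' ∈ Set.Ioo (0 : ℝ) 1,
            sqLoss α β a b = sqLoss α β' a b) ∧
          (∀ β ∈ Set.Ioo (0 : ℝ) 1, sqGrad α β a b = 0)))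
    ∧
    ((logLoss α β₁ a b = logLoss α β₂ a b ∧ logGrad α β₁ a b = 0 ∧ logGrad α β₂ a b = 0)
      ↔ ((∀ β ∈ Set.Ioo (0 : ℝ) 1, ∀ β' ∈ Set.Ioo (0 : ℝ) 1,
            logLoss α β a b = logLoss α β' a b) ∧
          (∀ β ∈ Set.Ioo (0 : ℝ) 1, logGrad α β a b = 0))) := by
  have hsl : ∀ β : ℝ, sqLoss α β a b
      = sqLoss α 0 a b + (sqLoss α 1 a b - sqLoss α 0 a b) * β := by
    intro β
    simp only [sqLoss, twoBitExp,
      Finset.sum_insert (by norm_num : (-1:ℝ) ∉ ({1} : Finset ℝ)), Finset.sum_singleton]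
    norm_num [rad, oddPred]; ring
  have hsg : ∀ β : ℝ, sqGrad α β a b
      = sqGrad α 0 a b + (sqGrad α 1 a b - sqGrad α 0 a b) * β := by
    intro β
    simp only [sqGrad, twoBitExp,
      Finset.sum_insert (by norm_num : (-1:ℝ) ∉ ({1} : Finset ℝ)), Finset.sum_singleton]
    norm_num [rad, oddPred]; ring
  have hll : ∀ β : ℝ, logLoss α β a b
      = logLoss α 0 a b + (logLoss α 1 a b - logLoss α 0 a b) * β := by
    intro β
    simp only [logLoss, twoBitExp,
      Finset.sum_insert (by norm_num : (-1:ℝ) ∉ ({1} : Finset ℝ)), Finset.sum_singleton]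
    norm_num [rad, oddPred]; ring
  have hlg : ∀ β : ℝ, logGrad α β a b
      = logGrad α 0 a b + (logGrad α 1 a b - logGrad α 0 a b) * β := by
    intro β
    simp only [logGrad, twoBitExp,
      Finset.sum_insert (by norm_num : (-1:ℝ) ∉ ({1} : Finset ℝ)), Finset.sum_singleton]
    norm_num [rad, oddPred]; ring
  constructor
  · constructor
    · rintro ⟨h1, h2, h3⟩
      exact ⟨fun β _ β' _ => affine_const _ _ hsl hne h1 β β',
        fun β _ => affine_zero _ _ hsg hne h2 h3 β⟩
    · rintro ⟨h1, h2⟩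
      exact ⟨h1 β₁ hβ₁ β₂ hβ₂, h2 β₁ hβ₁, h2 β₂ hβ₂⟩
  · constructor
    · rintro ⟨h1, h2, h3⟩
      exact ⟨fun β _ β' _ => affine_const _ _ hll hne h1 β β',
        fun β _ => affine_zero _ _ hlg hne h2 h3 β⟩
    · rintro ⟨h1, h2⟩
      exact ⟨h1 β₁ hβ₁ β₂ hβ₂, h2 β₁ hβ₁, h2 β₂ hβ₂⟩
end

section
/- Under the δ-gap condition (for every f in the finite hypothesis class F and all i ≠ j, |pᵢLᵢ(f) − pⱼLⱼ(f)| is either ≤ ε − δ or ≥ ε + δ), if the training set is (δ/(4p_max))-representative with respect to all losses, then the population constraint set P^ε = {f : |pᵢLᵢ(f) − pⱼLⱼ(f)| ≤ ε ∀ i≠j} and the empirical constraint set P̂^ε = {f : |pᵢL̂ᵢ(f) − pⱼL̂ⱼ(f)| ≤ ε ∀ i≠j} are equal. -/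
/-- Lemma D.2: under the `δ`-gap condition (for every `f` in the finite hypothesis
class and all `i ≠ j`, `|pᵢLᵢ(f) − pⱼLⱼ(f)|` is either `≤ ε − δ` or `≥ ε + δ`),
if the training set is `δ/(4·p_max)`-representative with respect to all losses,
then the population constraint set `P^ε` and the empirical constraint set `P̂^ε`
coincide. -/
theorem population_eq_empirical_constraint_set
    {F I : Type*} [Fintype F] [Fintype I] [Nonempty I]
    (L Lhat : I → F → ℝ) (p : I → ℝ) (pmax ε δ : ℝ)
    (hp : ∀ i, 0 < p i) (hpmax : IsGreatest (Set.range p) pmax)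
    (hε : 0 < ε) (hδ : 0 < δ)
    (hgap : ∀ f : F, ∀ i j, i ≠ j →
      |p i * L i f - p j * L j f| ≤ ε - δ ∨ ε + δ ≤ |p i * L i f - p j * L j f|)
    (hrep : ∀ i, ∀ f : F, |Lhat i f - L i f| ≤ δ / (4 * pmax)) :
    {f : F | ∀ i j, i ≠ j → |p i * L i f - p j * L j f| ≤ ε} =
      {f : F | ∀ i j, i ≠ j → |p i * Lhat i f - p j * Lhat j f| ≤ ε} := by
  obtain ⟨⟨i0, hi0⟩, hub⟩ := hpmax
  have hpm : 0 < pmax := hi0 ▸ hp i0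
  -- key perturbation bound
  have key : ∀ (i : I) (f : F), |p i * Lhat i f - p i * L i f| ≤ δ / 4 := by
    intro i f
    rw [← mul_sub, abs_mul, abs_of_pos (hp i)]
    calc p i * |Lhat i f - L i f| ≤ pmax * (δ / (4 * pmax)) := by
          apply mul_le_mul (hub ⟨i, rfl⟩) (hrep i f) (abs_nonneg _) hpm.le
      _ = δ / 4 := by field_simp
  have close : ∀ (i j : I) (f : F),
      |(|p i * Lhat i f - p j * Lhat j f| - |p i * L i f - p j * L j f|)| ≤ δ / 2 := by
    intro i j f
    have h := abs_sub_abs_le_abs_sub (p i * Lhat i f - p j * Lhat j f)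
      (p i * L i f - p j * L j f)
    have h2 := abs_sub_abs_le_abs_sub (p i * L i f - p j * L j f)
      (p i * Lhat i f - p j * Lhat j f)
    have hb : |(p i * Lhat i f - p j * Lhat j f) - (p i * L i f - p j * L j f)| ≤ δ / 2 := by
      have := abs_sub (p i * Lhat i f - p i * L i f) (p j * Lhat j f - p j * L j f)
      calc |(p i * Lhat i f - p j * Lhat j f) - (p i * L i f - p j * L j f)|
          = |(p i * Lhat i f - p i * L i f) - (p j * Lhat j f - p j * L j f)| := by ring_nf
        _ ≤ |p i * Lhat i f - p i * L i f| + |p j * Lhat j f - p j * L j f| := abs_sub _ _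
        _ ≤ δ / 4 + δ / 4 := add_le_add (key i f) (key j f)
        _ = δ / 2 := by ring
    rw [abs_sub_comm] at hb
    rw [abs_le]
    constructor
    · linarith [h2, hb]
    · rw [abs_sub_comm] at hb; linarith [h, hb]
  ext f
  simp only [Set.mem_setOf_eq]
  constructor
  · intro hpop i j hij
    rcases hgap f i j hij with hle | hge
    · have := close i j f
      rw [abs_le] at this
      linarith [this.2]
    · exact absurd (hpop i j hij) (by linarith)
  · intro hemp i j hij
    rcases hgap f i j hij with hle | hge
    · linarith
    · exfalso
      have := close i j f
      rw [abs_le] at this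
      have := hemp i j hij
      linarith
end
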